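/- For any β ≥ 1, σ > 0, μ > 0, and α > 1, the Rényi divergence of order α between the generalized Gaussian distributions N_β(0,σ) and N_β(μ,σ) (with densities proportional to exp(-|x/σ|^β) and exp(-|(x-μ)/σ|^β) respectively) is finite. -/

import Mathlib

open MeasureTheory Real Set

lemma integrable_exp_neg_mul_abs_aux {k : ℝ} (hk : 0 < k) :
    Integrable (fun x : ℝ => Real.exp (-(k * |x|))) := by
  have hIoi : IntegrableOn (fun x : ℝ => Real.exp (-(k * |x|))) (Ioi 0) := by
    refine (exp_neg_integrableOn_Ioi 0 hk).congr_fun (fun x hx => ?_) measurableSet_Ioi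
    rw [abs_of_pos (by exact hx)]; simp only [neg_mul]
  have hIic : IntegrableOn (fun x : ℝ => Real.exp (-(k * |x|))) (Iic 0) := by
    rw [← Measure.map_neg_eq_self (volume : Measure ℝ)]
    have m : MeasurableEmbedding fun x : ℝ => -x :=
      (Homeomorph.neg ℝ).measurableEmbedding
    rw [m.integrableOn_map_iff]
    simp_rw [Function.comp_def, abs_neg, neg_preimage, neg_Iic, neg_zero]
    exact Iff.mpr integrableOn_Ici_iff_integrableOn_Ioi hIoi
  have h := hIic.union hIoi
  rwa [Iic_union_Ioi, integrableOn_univ] at h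

/-- Key pointwise bound. -/
lemma key_bound (β σ μ α : ℝ) (hβ : 1 ≤ β) (hσ : 0 < σ) (hμ : 0 < μ) (hα : 1 < α) :
    ∃ D : ℝ, ∀ x : ℝ,
      (α - 1) * |(x - μ) / σ| ^ β - α * |x / σ| ^ β ≤ D - (1 / (2 * σ)) * |x| := by
  have hβ0 : (0:ℝ) < β := lt_of_lt_of_le one_pos hβ
  have hα1 : (0:ℝ) < α - 1 := by linarith
  set R : ℝ := (2 * α - 1) / (2 * (α - 1)) with hR_def
  have hR1 : 1 < R := by
    rw [hR_def, lt_div_iff₀ (by linarith)]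
    linarith
  have hR0 : (0:ℝ) ≤ R := by linarith
  set L : ℝ := R ^ (1 / β) with hL_def
  have hL1 : 1 < L := by
    rw [hL_def]
    exact (Real.one_lt_rpow_iff_of_pos (by linarith)).mpr
      (Or.inl ⟨hR1, by positivity⟩)
  have hLβ : L ^ β = R := by
    rw [hL_def, ← Real.rpow_mul hR0, one_div_mul_cancel (ne_of_gt hβ0), Real.rpow_one]
  set c : ℝ := μ / σ with hc_def
  have hc0 : 0 < c := div_pos hμ hσ
  set M : ℝ := (L * c / (L - 1)) ^ β with hM_def
  have hL1' : (0:ℝ) < L - 1 := by linarith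
  have hM0 : 0 ≤ M :=
    Real.rpow_nonneg (div_nonneg (mul_nonneg (by linarith) hc0.le) hL1'.le) _
  refine ⟨(α - 1) * M + 1 / 2, fun x => ?_⟩
  set u : ℝ := |x| / σ with hu_def
  have hu0 : 0 ≤ u := by positivity
  have hxu : |x / σ| = u := by
    rw [hu_def, abs_div, abs_of_pos hσ]
  have hv : |(x - μ) / σ| ≤ u + c := by
    rw [abs_div, abs_of_pos hσ, hu_def, hc_def, ← add_div]
    gcongr
    calc |x - μ| ≤ |x| + |μ| := abs_sub x μ
      _ = |x| + μ := by rw [abs_of_pos hμ]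
  -- step 1 : |(x-μ)/σ|^β ≤ L^β * u^β + M
  have step1 : |(x - μ) / σ| ^ β ≤ L ^ β * u ^ β + M := by
    have h1 : |(x - μ) / σ| ^ β ≤ (u + c) ^ β :=
      Real.rpow_le_rpow (abs_nonneg _) hv (le_of_lt hβ0)
    refine h1.trans ?_
    by_cases hcase : c ≤ (L - 1) * u
    · have : u + c ≤ L * u := by nlinarith
      calc (u + c) ^ β ≤ (L * u) ^ β :=
            Real.rpow_le_rpow (by positivity) this (le_of_lt hβ0)
        _ = L ^ β * u ^ β := Real.mul_rpow (by linarith) hu0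
        _ ≤ L ^ β * u ^ β + M := by linarith
    · push_neg at hcase
      have : u + c ≤ L * c / (L - 1) := by
        rw [← sub_nonneg]
        have : L * c / (L - 1) - (u + c) = (c - (L - 1) * u) / (L - 1) := by
          field_simp; ring
        rw [this]
        exact div_nonneg (by nlinarith) hL1'.le
      calc (u + c) ^ β ≤ (L * c / (L - 1)) ^ β :=
            Real.rpow_le_rpow (by positivity) this (le_of_lt hβ0)
        _ = M := by rw [hM_def]
        _ ≤ L ^ β * u ^ β + M := by
            have : 0 ≤ L ^ β * u ^ β := by positivity
            linarith
  -- step 2 : u - 1 ≤ u ^ β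
  have step2 : u - 1 ≤ u ^ β := by
    by_cases hu1 : 1 ≤ u
    · have : u ^ (1:ℝ) ≤ u ^ β := Real.rpow_le_rpow_of_exponent_le hu1 hβ
      rw [Real.rpow_one] at this
      linarith
    · push_neg at hu1
      have : (0:ℝ) ≤ u ^ β := Real.rpow_nonneg hu0 _
      linarith
  have key : (α - 1) * |(x - μ) / σ| ^ β - α * |x / σ| ^ β
      ≤ (α - 1) * M + 1 / 2 - (1 / 2) * u := by
    rw [hxu]
    have h2 : (α - 1) * |(x - μ) / σ| ^ β ≤ (α - 1) * (L ^ β * u ^ β + M) :=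
      mul_le_mul_of_nonneg_left step1 (le_of_lt hα1)
    have h3 : (α - 1) * L ^ β = α - 1 / 2 := by
      rw [hLβ, hR_def]
      field_simp
    nlinarith [step2, Real.rpow_nonneg hu0 β]
  have huabs : (1 / 2) * u = (1 / (2 * σ)) * |x| := by
    rw [hu_def]; field_simp
  linarith [key, huabs.ge, huabs.le]

theorem stmt_0 (β σ μ α : ℝ) (hβ : 1 ≤ β) (hσ : 0 < σ) (hμ : 0 < μ) (hα : 1 < α) :
    Integrable (fun x : ℝ =>
      ((1 / (2 * σ * Real.Gamma (1 + 1 / β))) * Real.exp (-(|x / σ| ^ β))) ^ α /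
        ((1 / (2 * σ * Real.Gamma (1 + 1 / β))) * Real.exp (-(|(x - μ) / σ| ^ β))) ^ (α - 1)) := by
  have hβ0 : (0:ℝ) < β := lt_of_lt_of_le one_pos hβ
  set C : ℝ := 1 / (2 * σ * Real.Gamma (1 + 1 / β)) with hC_def
  have hΓ : 0 < Real.Gamma (1 + 1 / β) := Real.Gamma_pos_of_pos (by positivity)
  have hC : 0 < C := by rw [hC_def]; positivity
  -- rewrite the integrand
  have hfx : ∀ x : ℝ,
      (C * Real.exp (-(|x / σ| ^ β))) ^ α /
        (C * Real.exp (-(|(x - μ) / σ| ^ β))) ^ (α - 1)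
      = C * Real.exp ((α - 1) * |(x - μ) / σ| ^ β - α * |x / σ| ^ β) := by
    intro x
    set a : ℝ := |x / σ| ^ β with ha_def
    set b : ℝ := |(x - μ) / σ| ^ β with hb_def
    calc (C * Real.exp (-a)) ^ α / (C * Real.exp (-b)) ^ (α - 1)
        = (C ^ α * Real.exp (-a * α)) / (C ^ (α - 1) * Real.exp (-b * (α - 1))) := by
          rw [Real.mul_rpow hC.le (Real.exp_nonneg _), Real.mul_rpow hC.le (Real.exp_nonneg _),
              ← Real.exp_mul, ← Real.exp_mul]
      _ = (C ^ α / C ^ (α - 1)) * (Real.exp (-a * α) / Real.exp (-b * (α - 1))) := by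
          rw [div_mul_div_comm]
      _ = C * Real.exp ((α - 1) * b - α * a) := by
          rw [← Real.rpow_sub hC, show α - (α - 1) = 1 by ring, Real.rpow_one,
              ← Real.exp_sub]
          congr 1
          ring
  obtain ⟨D, hD⟩ := key_bound β σ μ α hβ hσ hμ hα
  have hcont : Continuous fun x : ℝ =>
      C * Real.exp ((α - 1) * |(x - μ) / σ| ^ β - α * |x / σ| ^ β) := by
    have h1 : Continuous fun x : ℝ => |x / σ| ^ β :=
      (continuous_abs.comp (continuous_id.div_const σ)).rpow_const
        (fun x => Or.inr (le_of_lt hβ0))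
    have h2 : Continuous fun x : ℝ => |(x - μ) / σ| ^ β :=
      (continuous_abs.comp ((continuous_id.sub continuous_const).div_const σ)).rpow_const
        (fun x => Or.inr (le_of_lt hβ0))
    exact continuous_const.mul
      (((continuous_const.mul h2).sub (continuous_const.mul h1)).rexp)
  have hint : Integrable (fun x : ℝ =>
      C * Real.exp ((α - 1) * |(x - μ) / σ| ^ β - α * |x / σ| ^ β)) := by
    refine Integrable.mono'
      (g := fun x : ℝ => (C * Real.exp D) * Real.exp (-(1 / (2 * σ) * |x|)))
      ((integrable_exp_neg_mul_abs_aux (by positivity)).const_mul _)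
      hcont.aestronglyMeasurable ?_
    filter_upwards with x
    rw [Real.norm_eq_abs, abs_of_pos (by positivity), mul_assoc, ← Real.exp_add]
    exact mul_le_mul_of_nonneg_left
      (Real.exp_le_exp.mpr (by linarith [hD x])) (le_of_lt hC)
  exact hint.congr (Filter.Eventually.of_forall fun x => (hfx x).symm)
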